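/- Let n ≥ 1, B ⊆ {1, ..., n}, θ > 0, and λ_1, ..., λ_n ≥ 0. Let Z_1, ..., Z_n be independent Poisson random variables with E Z_i = θ λ_i, and let R_B = Σ_{i∈B} i Z_i. Set p_B(k) = P(R_B = k) for k ∈ ℕ and g_B(i) = θ i λ_i 1(i ∈ B). Then p_B(0) = exp(−Σ_{i∈B} θ λ_i), and for every k ≥ 1, k · p_B(k) = Σ_{i=1}^k g_B(i) p_B(k − i). -/

import Mathlib

open MeasureTheory ProbabilityTheory Finset


lemma conv_prob {Ω : Type*} [MeasurableSpace Ω] (μ : Measure Ω) [IsProbabilityMeasure μ]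
    {X Y : Ω → ℕ} (hX : Measurable X) (hY : Measurable Y) (h : IndepFun X Y μ) (k : ℕ) :
    (μ {ω | X ω + Y ω = k}).toReal
      = ∑ m ∈ Finset.range (k+1), (μ {ω | X ω = m}).toReal * (μ {ω | Y ω = k - m}).toReal := by
  have hset : {ω | X ω + Y ω = k}
      = ⋃ m ∈ Finset.range (k+1), ({ω | X ω = m} ∩ {ω | Y ω = k - m}) := by
    ext ω
    simp only [Set.mem_setOf_eq, Set.mem_iUnion, Set.mem_inter_iff, Finset.mem_range]
    constructor
    · intro hk; exact ⟨X ω, by omega, rfl, by omega⟩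
    · rintro ⟨m, hm, h1, h2⟩; omega
  have hmeas : ∀ m : ℕ, MeasurableSet ({ω | X ω = m} ∩ {ω | Y ω = k - m}) := by
    intro m
    exact (hX (measurableSet_singleton m)).inter (hY (measurableSet_singleton (k - m)))
  have hdisj : Set.PairwiseDisjoint ↑(Finset.range (k+1))
      (fun m => {ω | X ω = m} ∩ {ω | Y ω = k - m}) := by
    intro i _ j _ hij
    refine Set.disjoint_left.2 ?_
    rintro ω ⟨h1, _⟩ ⟨h2, _⟩
    exact hij (h1.symm.trans h2)
  rw [hset, measure_biUnion_finset hdisj (fun m _ => hmeas m)]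
  rw [ENNReal.toReal_sum (fun m _ => measure_ne_top μ _)]
  refine Finset.sum_congr rfl fun m _ => ?_
  have := h.measure_inter_preimage_eq_mul {m} {k - m}
    (measurableSet_singleton m) (measurableSet_singleton (k - m))
  simp only [Set.preimage, Set.mem_singleton_iff] at this
  rw [this, ENNReal.toReal_mul]



noncomputable def sclf (l : ℝ) (a m : ℕ) : ℝ :=
  if a ∣ m then Real.exp (-l) * l ^ (m / a) / ((m / a).factorial : ℝ) else 0

lemma sclf_zero (l : ℝ) (a : ℕ) : sclf l a 0 = Real.exp (-l) := by
  simp [sclf]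

lemma sclf_rec (l : ℝ) (a m : ℕ) (ha : 1 ≤ a) (hm : 1 ≤ m) :
    (m : ℝ) * sclf l a m = ((a : ℝ) * l) * (if a ≤ m then sclf l a (m - a) else 0) := by
  by_cases hd : a ∣ m
  · obtain ⟨j, hj⟩ := hd
    obtain ⟨i, rfl⟩ : ∃ i, j = i + 1 := by
      refine ⟨j - 1, ?_⟩
      rcases Nat.eq_zero_or_pos j with h | h
      · subst h; simp at hj; omega
      · omega
    have ham : a ≤ m := by
      have : a * 1 ≤ a * (i + 1) := Nat.mul_le_mul_left a (by omega)
      omega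
    have hma : m - a = a * i := by
      rw [hj]; simp [Nat.mul_succ]
    have h1 : m / a = i + 1 := by rw [hj]; exact Nat.mul_div_cancel_left _ (by omega)
    have h2 : (m - a) / a = i := by rw [hma]; exact Nat.mul_div_cancel_left _ (by omega)
    have hdm : a ∣ m := ⟨i + 1, hj⟩
    have hdma : a ∣ (m - a) := ⟨i, hma⟩
    simp only [sclf, hdm, hdma, if_pos, ham, if_true, h1, h2]
    have hfact : ((i.factorial : ℝ)) ≠ 0 := Nat.cast_ne_zero.2 i.factorial_ne_zero
    rw [hj, Nat.factorial_succ]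
    push_cast
    field_simp
    ring
  · have h0 : sclf l a m = 0 := by simp [sclf, hd]
    rw [h0]
    by_cases ham : a ≤ m
    · have : ¬ a ∣ (m - a) := by
        intro hc
        have : a ∣ m := by
          have := Nat.dvd_add hc (dvd_refl a)
          rwa [Nat.sub_add_cancel ham] at this
        exact hd this
      simp [sclf, this, ham]
    · simp [ham]



lemma scl_meas {Ω : Type*} [MeasurableSpace Ω] (μ : Measure Ω) {W : Ω → ℕ} (l : ℝ)
    (hW : ∀ k : ℕ, (μ {ω | W ω = k}).toReal = Real.exp (-l) * l ^ k / (k.factorial : ℝ))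
    (a : ℕ) (ha : 1 ≤ a) (m : ℕ) :
    (μ {ω | a * W ω = m}).toReal = sclf l a m := by
  by_cases hd : a ∣ m
  · have hset : {ω | a * W ω = m} = {ω | W ω = m / a} := by
      ext ω
      simp only [Set.mem_setOf_eq]
      constructor
      · intro h; rw [← h, Nat.mul_div_cancel_left _ (by omega)]
      · intro h; rw [h, Nat.mul_div_cancel' hd]
    rw [hset, hW (m / a)]
    simp [sclf, hd]
  · have hset : {ω | a * W ω = m} = ∅ := by
      ext ω
      simp only [Set.mem_setOf_eq, Set.mem_empty_iff_false, iff_false]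
      intro h
      exact hd ⟨W ω, h.symm⟩
    rw [hset]
    simp [sclf, hd]

lemma sum_Icc_extend (c k : ℕ) (hc : c ≤ k) (f : ℕ → ℝ) :
    ∑ j ∈ Finset.Icc 1 c, f j = ∑ j ∈ Finset.Icc 1 k, if j ≤ c then f j else 0 := by
  rw [← Finset.sum_filter]
  congr 1
  ext j
  simp only [Finset.mem_filter, Finset.mem_Icc]
  omega

lemma sum_range_extend (c k : ℕ) (hc : c ≤ k) (f : ℕ → ℝ) :
    ∑ m ∈ Finset.range (c + 1), f m = ∑ m ∈ Finset.range (k + 1), if m ≤ c then f m else 0 := by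
  rw [← Finset.sum_filter]
  congr 1
  ext m
  simp only [Finset.mem_filter, Finset.mem_range]
  omega



lemma indep_step {Ω : Type*} [MeasurableSpace Ω] (μ : Measure Ω) [IsProbabilityMeasure μ]
    (n : ℕ) (Z : ℕ → Ω → ℕ) (hZmeas : ∀ i, Measurable (Z i))
    (hindep : iIndepFun (fun i : (Finset.Icc 1 n) => Z i) μ)
    (B : Finset ℕ) (hB : B ⊆ Finset.Icc 1 n) (a : ℕ) (haIcc : a ∈ Finset.Icc 1 n)
    (ha : a ∉ B) :
    IndepFun (fun ω => a * Z a ω) (fun ω => ∑ i ∈ B, i * Z i ω) μ := by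
  have hmeas : ∀ i : (Finset.Icc 1 n : Finset ℕ),
      Measurable (fun ω => (i : ℕ) * Z i ω) :=
    fun i => (measurable_from_top (f := fun x : ℕ => (i : ℕ) * x)).comp (hZmeas i)
  have hindep2 : iIndepFun
      (fun i : (Finset.Icc 1 n : Finset ℕ) => fun ω => (i : ℕ) * Z i ω) μ :=
    hindep.comp (fun i x => (i : ℕ) * x) (fun i => measurable_from_top)
  set s : Finset (Finset.Icc 1 n : Finset ℕ) :=
    (Finset.Icc 1 n).attach.filter (fun i => (i : ℕ) ∈ B) with hs
  have has : (⟨a, haIcc⟩ : (Finset.Icc 1 n : Finset ℕ)) ∉ s := by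
    simp [hs, ha]
  have h1 : IndepFun (∑ j ∈ s, fun ω => (j : ℕ) * Z j ω) (fun ω => a * Z a ω) μ :=
    hindep2.indepFun_finsetSum_of_notMem hmeas has
  have h2 : (∑ j ∈ s, fun ω => (j : ℕ) * Z j ω) = fun ω => ∑ i ∈ B, i * Z i ω := by
    funext ω
    rw [Finset.sum_apply]
    rw [hs, Finset.sum_filter, Finset.sum_attach (Finset.Icc 1 n)
      (fun i => if i ∈ B then i * Z i ω else 0)]
    rw [Finset.sum_ite_mem, Finset.inter_eq_right.2 hB]
  rw [h2] at h1
  exact h1.symm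


lemma main_rec {Ω : Type*} [MeasurableSpace Ω] (μ : Measure Ω) [IsProbabilityMeasure μ]
    (n : ℕ) (θ : ℝ) (lam : ℕ → ℝ)
    (Z : ℕ → Ω → ℕ) (hZmeas : ∀ i, Measurable (Z i))
    (hpois : ∀ i ∈ Finset.Icc 1 n, ∀ k : ℕ,
      (μ {ω | Z i ω = k}).toReal
        = Real.exp (-(θ * lam i)) * (θ * lam i) ^ k / (k.factorial : ℝ))
    (hindep : iIndepFun
        (fun i : (Finset.Icc 1 n) => Z i) μ) :
    ∀ B : Finset ℕ, B ⊆ Finset.Icc 1 n →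
      ((μ {ω | ∑ i ∈ B, i * Z i ω = 0}).toReal = Real.exp (-(∑ i ∈ B, θ * lam i)) ∧
       ∀ k : ℕ, 1 ≤ k →
         (k : ℝ) * (μ {ω | ∑ i ∈ B, i * Z i ω = k}).toReal
           = ∑ j ∈ Finset.Icc 1 k, (if j ∈ B then θ * j * lam j else 0)
               * (μ {ω | ∑ i ∈ B, i * Z i ω = k - j}).toReal) := by
  intro B
  induction B using Finset.induction_on with
  | empty =>
    intro _
    constructor
    · simp
    · intro k hk
      have h1 : {ω : Ω | (0 : ℕ) = k} = ∅ := by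
        ext ω; simp; omega
      simp [h1]
  | @insert a B ha ih =>
    intro hsub
    have hBsub : B ⊆ Finset.Icc 1 n := fun x hx => hsub (Finset.mem_insert_of_mem hx)
    have haIcc : a ∈ Finset.Icc 1 n := hsub (Finset.mem_insert_self a B)
    have ha1 : 1 ≤ a := (Finset.mem_Icc.1 haIcc).1
    obtain ⟨ihP0, ihRec⟩ := ih hBsub
    set l : ℝ := θ * lam a with hl
    set P : ℕ → ℝ := fun k => (μ {ω | ∑ i ∈ B, i * Z i ω = k}).toReal with hP
    set Q : ℕ → ℝ := fun k => (μ {ω | ∑ i ∈ insert a B, i * Z i ω = k}).toReal with hQdef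
    -- pmf of a * Z a
    have hS : ∀ m : ℕ, (μ {ω | a * Z a ω = m}).toReal = sclf l a m :=
      scl_meas μ l (hpois a haIcc) a ha1
    -- convolution identity
    have hmeasB : Measurable (fun ω => ∑ i ∈ B, i * Z i ω) := by
      apply Finset.measurable_sum
      intro i _
      exact (measurable_from_top (f := fun x : ℕ => i * x)).comp (hZmeas i)
    have hmeasa : Measurable (fun ω => a * Z a ω) :=
      (measurable_from_top (f := fun x : ℕ => a * x)).comp (hZmeas a)
    have hIndep := indep_step μ n Z hZmeas hindep B hBsub a haIcc ha
    have hconv : ∀ k : ℕ, Q k = ∑ m ∈ Finset.range (k+1), sclf l a m * P (k - m) := by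
      intro k
      have hset : {ω | ∑ i ∈ insert a B, i * Z i ω = k}
          = {ω | a * Z a ω + ∑ i ∈ B, i * Z i ω = k} := by
        ext ω; simp [Finset.sum_insert ha]
      have := conv_prob μ hmeasa hmeasB hIndep k
      rw [hQdef]
      simp only [hset]
      rw [this]
      exact Finset.sum_congr rfl fun m _ => by rw [hS m]
    constructor
    · -- value at 0
      have h0 : Q 0 = sclf l a 0 * P 0 := by
        rw [hconv 0]; simp
      show Q 0 = _
      rw [h0, sclf_zero, hP]
      show Real.exp (-l) * (μ {ω | ∑ i ∈ B, i * Z i ω = 0}).toReal = _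
      rw [ihP0, ← Real.exp_add, Finset.sum_insert ha]
      ring_nf
      rw [hl]
    · -- recursion
      intro k hk
      have hsplit : ∀ m ∈ Finset.range (k+1),
          (k : ℝ) * (sclf l a m * P (k - m))
            = (θ * a * lam a) * ((if a ≤ m then sclf l a (m - a) else 0) * P (k - m))
              + sclf l a m * (((k - m : ℕ) : ℝ) * P (k - m)) := by
        intro m hm
        have hmk : m ≤ k := by simp only [Finset.mem_range] at hm; omega
        have hcast : (k : ℝ) = (m : ℝ) + ((k - m : ℕ) : ℝ) := by
          rw [Nat.cast_sub hmk]; ring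
        have h1 : (m : ℝ) * sclf l a m
            = (θ * a * lam a) * (if a ≤ m then sclf l a (m - a) else 0) := by
          by_cases hm0 : m = 0
          · subst hm0
            have : ¬ a ≤ 0 := by omega
            simp [this]
          · rw [sclf_rec l a m ha1 (by omega)]
            ring_nf
            rw [hl]; ring
        calc (k : ℝ) * (sclf l a m * P (k - m))
            = ((m : ℝ) * sclf l a m) * P (k - m)
              + sclf l a m * (((k - m : ℕ) : ℝ) * P (k - m)) := by rw [hcast]; ring
          _ = _ := by rw [h1]; ring
      have hT1 : ∑ m ∈ Finset.range (k+1),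
          (θ * a * lam a) * ((if a ≤ m then sclf l a (m - a) else 0) * P (k - m))
          = if a ≤ k then (θ * a * lam a) * Q (k - a) else 0 := by
        rw [← Finset.mul_sum]
        have hinner : ∑ m ∈ Finset.range (k+1),
            (if a ≤ m then sclf l a (m - a) else 0) * P (k - m)
            = if a ≤ k then Q (k - a) else 0 := by
          by_cases hak : a ≤ k
          · rw [if_pos hak]
            have heq : ∀ m ∈ Finset.range (k+1),
                (if a ≤ m then sclf l a (m - a) else 0) * P (k - m)
                = if a ≤ m then sclf l a (m - a) * P (k - m) else 0 := by
              intro m _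
              by_cases h : a ≤ m <;> simp [h]
            rw [Finset.sum_congr rfl heq, ← Finset.sum_filter]
            have hfil : (Finset.range (k+1)).filter (fun m => a ≤ m) = Finset.Ico a (k+1) := by
              ext m; simp only [Finset.mem_filter, Finset.mem_range, Finset.mem_Ico]; omega
            rw [hfil, Finset.sum_Ico_eq_sum_range, hconv (k - a)]
            have hrange : k + 1 - a = k - a + 1 := by omega
            rw [hrange]
            refine Finset.sum_congr rfl fun i hi => ?_
            simp only [Finset.mem_range] at hi
            congr 1
            · congr 1; omega
            · congr 1; omega
          · rw [if_neg hak]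
            refine Finset.sum_eq_zero fun m hm => ?_
            simp only [Finset.mem_range] at hm
            have : ¬ a ≤ m := by omega
            simp [this]
        rw [hinner]
        by_cases hak : a ≤ k <;> simp [hak]
      have hT2 : ∑ m ∈ Finset.range (k+1), sclf l a m * (((k - m : ℕ) : ℝ) * P (k - m))
          = ∑ j ∈ Finset.Icc 1 k, (if j ∈ B then θ * j * lam j else 0) * Q (k - j) := by
        have hstep1 : ∀ m ∈ Finset.range (k+1),
            sclf l a m * (((k - m : ℕ) : ℝ) * P (k - m))
            = ∑ j ∈ Finset.Icc 1 k, (if j ≤ k - m then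
                sclf l a m * ((if j ∈ B then θ * j * lam j else 0) * P (k - m - j)) else 0) := by
          intro m hm
          have hmk : m ≤ k := by simp only [Finset.mem_range] at hm; omega
          have hin : ((k - m : ℕ) : ℝ) * P (k - m)
              = ∑ j ∈ Finset.Icc 1 (k - m),
                  (if j ∈ B then θ * j * lam j else 0) * P (k - m - j) := by
            by_cases hmk' : m = k
            · subst hmk'
              simp
            · exact ihRec (k - m) (by omega)
          rw [hin, sum_Icc_extend (k - m) k (by omega), Finset.mul_sum]
          refine Finset.sum_congr rfl fun j _ => ?_
          by_cases h : j ≤ k - m <;> simp [h]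
        rw [Finset.sum_congr rfl hstep1, Finset.sum_comm]
        refine Finset.sum_congr rfl fun j hj => ?_
        simp only [Finset.mem_Icc] at hj
        have hstep2 : ∀ m ∈ Finset.range (k+1),
            (if j ≤ k - m then
              sclf l a m * ((if j ∈ B then θ * j * lam j else 0) * P (k - m - j)) else 0)
            = (if m ≤ k - j then
              (if j ∈ B then θ * j * lam j else 0) * (sclf l a m * P (k - j - m)) else 0) := by
          intro m hm
          simp only [Finset.mem_range] at hm
          have hiff : (j ≤ k - m) ↔ (m ≤ k - j) := by omega
          by_cases h : j ≤ k - m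
          · rw [if_pos h, if_pos (hiff.1 h)]
            have : k - m - j = k - j - m := by omega
            rw [this]; ring
          · rw [if_neg h, if_neg (fun hc => h (hiff.2 hc))]
        rw [Finset.sum_congr rfl hstep2, ← sum_range_extend (k - j) k (by omega)
          (fun m => (if j ∈ B then θ * j * lam j else 0) * (sclf l a m * P (k - j - m)))]
        rw [← Finset.mul_sum, ← hconv (k - j)]
      -- assemble
      have hLHS : (k : ℝ) * Q k
          = (if a ≤ k then (θ * a * lam a) * Q (k - a) else 0)
            + ∑ j ∈ Finset.Icc 1 k, (if j ∈ B then θ * j * lam j else 0) * Q (k - j) := by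
        rw [hconv k, Finset.mul_sum, Finset.sum_congr rfl hsplit,
          Finset.sum_add_distrib, hT1, hT2]
      rw [hLHS]
      have hg : ∀ j ∈ Finset.Icc 1 k,
          (if j ∈ insert a B then θ * j * lam j else 0) * Q (k - j)
          = (if j ∈ B then θ * j * lam j else 0) * Q (k - j)
            + (if j = a then (θ * a * lam a) * Q (k - j) else 0) := by
        intro j _
        by_cases hja : j = a
        · subst hja
          simp [ha, Finset.mem_insert]
        · simp [hja, Finset.mem_insert]
      rw [Finset.sum_congr rfl hg, Finset.sum_add_distrib]
      rw [Finset.sum_ite_eq' (Finset.Icc 1 k) a (fun j => (θ * a * lam a) * Q (k - j))]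
      have : a ∈ Finset.Icc 1 k ↔ a ≤ k := by simp [Finset.mem_Icc]; omega
      by_cases hak : a ≤ k
      · rw [if_pos (this.2 hak), if_pos hak]; ring
      · rw [if_neg (fun hc => hak (this.1 hc)), if_neg hak]; ring


open MeasureTheory ProbabilityTheory in
/-- Recursion for the density of a weighted sum of independent
Poisson variables: with `Z_i` independent Poisson of mean `θ λ_i` (for
`1 ≤ i ≤ n`), `R_B = Σ_{i∈B} i Z_i`, `p_B(k) = P(R_B = k)` and
`g_B(i) = θ i λ_i 1(i ∈ B)`, one has `p_B(0) = exp(-Σ_{i∈B} θ λ_i)` and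
`k p_B(k) = Σ_{i=1}^k g_B(i) p_B(k-i)` for all `k ≥ 1`. -/
theorem stmt19
    {Ω : Type*} [MeasurableSpace Ω] (μ : Measure Ω) [IsProbabilityMeasure μ]
    (n : ℕ) (hn : 1 ≤ n)
    (B : Finset ℕ) (hB : B ⊆ Finset.Icc 1 n)
    (θ : ℝ) (hθ : 0 < θ)
    (lam : ℕ → ℝ) (hlam : ∀ i ∈ Finset.Icc 1 n, 0 ≤ lam i)
    (Z : ℕ → Ω → ℕ) (hZmeas : ∀ i, Measurable (Z i))
    (hpois : ∀ i ∈ Finset.Icc 1 n, ∀ k : ℕ,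
      (μ {ω | Z i ω = k}).toReal
        = Real.exp (-(θ * lam i)) * (θ * lam i) ^ k / (k.factorial : ℝ))
    (hindep : iIndepFun
        (fun i : (Finset.Icc 1 n) => Z i) μ)
    (R : Ω → ℕ) (hR : R = fun ω => ∑ i ∈ B, i * Z i ω)
    (p : ℕ → ℝ) (hp : ∀ k, p k = (μ {ω | R ω = k}).toReal)
    (g : ℕ → ℝ) (hg : ∀ i, g i = θ * i * lam i * (if i ∈ B then 1 else 0)) :
    p 0 = Real.exp (-(∑ i ∈ B, θ * lam i))
    ∧ ∀ k : ℕ, 1 ≤ k → (k : ℝ) * p k = ∑ i ∈ Finset.Icc 1 k, g i * p (k - i) := by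
  obtain ⟨h0, hrec⟩ := main_rec μ n θ lam Z hZmeas hpois hindep B hB
  have hpeq : ∀ k, p k = (μ {ω | ∑ i ∈ B, i * Z i ω = k}).toReal := by
    intro k; rw [hp, hR]
  constructor
  · rw [hpeq 0]; exact h0
  · intro k hk
    rw [hpeq k, hrec k hk]
    refine Finset.sum_congr rfl fun i _ => ?_
    rw [hg i, hpeq (k - i)]
    by_cases h : i ∈ B <;> simp [h]
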